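/- Let A be an integral domain, ⋆ a star operation on A, and a a nonzero nonunit of A. Assume that every proper ⋆-finite ⋆-ideal of A containing a is contained in a proper ⋆-finite ⋆-ideal of A satisfying property (⋆-c.a.). Then the poset (Σ^⋆_a, ⊆) has maximal elements. -/
import Mathlib

open scoped nonZeroDivisors

/-- A star operation on an integral domain `A` with quotient field `K`: a map on
(nonzero) fractional ideals satisfying `A^⋆ = A`, `(xI)^⋆ = x·I^⋆`, `I ⊆ I^⋆`,
monotonicity and idempotency. -/
structure StarOperation (A : Type*) [CommRing A] [IsDomain A]
    (K : Type*) [Field K] [Algebra A K] [IsFractionRing A K] where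
  star : FractionalIdeal A⁰ K → FractionalIdeal A⁰ K
  star_one : star 1 = 1
  star_smul : ∀ (x : K), x ≠ 0 → ∀ I : FractionalIdeal A⁰ K, I ≠ 0 →
    star (FractionalIdeal.spanSingleton A⁰ x * I) = FractionalIdeal.spanSingleton A⁰ x * star I
  le_star : ∀ I : FractionalIdeal A⁰ K, I ≠ 0 → I ≤ star I
  mono : ∀ I J : FractionalIdeal A⁰ K, I ≠ 0 → I ≤ J → star I ≤ star J
  star_idem : ∀ I : FractionalIdeal A⁰ K, I ≠ 0 → star (star I) = star I

variable {A : Type*} [CommRing A] [IsDomain A]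
  {K : Type*} [Field K] [Algebra A K] [IsFractionRing A K]

/-- `⋆` is of finite type: `I^⋆` is the union of the `J^⋆` over the finitely
generated (nonzero) fractional ideals `J ⊆ I`. -/
def StarOperation.IsFiniteType (s : StarOperation A K) : Prop :=
  ∀ I : FractionalIdeal A⁰ K, I ≠ 0 → ∀ x : K, x ∈ s.star I →
    ∃ J : FractionalIdeal A⁰ K, J ≠ 0 ∧ J ≤ I ∧ (J : Submodule A K).FG ∧ x ∈ s.star J

/-- A (nonzero, integral) ideal `I` is a `⋆`-ideal if `I^⋆ = I`. -/
def IsStarIdeal (s : StarOperation A K) (I : Ideal A) : Prop :=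
  I ≠ 0 ∧ s.star ↑I = (I : FractionalIdeal A⁰ K)

/-- A (nonzero, integral) ideal `I` is `⋆`-finite if `J^⋆ = I^⋆` for some finitely
generated (nonzero) ideal `J`. -/
def IsStarFinite (s : StarOperation A K) (I : Ideal A) : Prop :=
  I ≠ 0 ∧ ∃ J : Ideal A, J ≠ 0 ∧ J.FG ∧ s.star ↑J = s.star (I : FractionalIdeal A⁰ K)

/-- An ideal of `A` is `⋆`-maximal if it is maximal among proper `⋆`-ideals. -/
def IsStarMaximal (s : StarOperation A K) (M : Ideal A) : Prop :=
  M ≠ ⊤ ∧ IsStarIdeal s M ∧ ∀ J : Ideal A, J ≠ ⊤ → IsStarIdeal s J → M ≤ J → J = M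

/-- Property (⋆-c.a.): for every pair of proper ⋆-finite ⋆-ideals `𝔞₁, 𝔞₂` containing
`𝔞`, the ideal `(𝔞₁ + 𝔞₂)^⋆` is proper. -/
def StarCA (s : StarOperation A K) (𝔞 : Ideal A) : Prop :=
  ∀ 𝔞₁ 𝔞₂ : Ideal A, 𝔞 ≤ 𝔞₁ → 𝔞 ≤ 𝔞₂ →
    𝔞₁ ≠ ⊤ → IsStarIdeal s 𝔞₁ → IsStarFinite s 𝔞₁ →
    𝔞₂ ≠ ⊤ → IsStarIdeal s 𝔞₂ → IsStarFinite s 𝔞₂ →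
    s.star ↑(𝔞₁ + 𝔞₂) ≠ 1

/-- `ℱ` is a ⋆-comaximal collection over `a`: `a` lies in every member and
`(𝔞₁ + 𝔞₂)^⋆ = A` for all distinct members. -/
def IsStarComaximalOver (s : StarOperation A K) (a : A) (F : Set (Ideal A)) : Prop :=
  (∀ I ∈ F, a ∈ I) ∧ ∀ I ∈ F, ∀ J ∈ F, I ≠ J → s.star ↑(I + J) = 1

/-- `(Σ')^⋆_a`: the ⋆-comaximal collections over `a` of proper ⋆-finite ⋆-ideals. -/
def SigmaP (s : StarOperation A K) (a : A) : Set (Set (Ideal A)) :=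
  {F | IsStarComaximalOver s a F ∧ ∀ I ∈ F, I ≠ ⊤ ∧ IsStarIdeal s I ∧ IsStarFinite s I}

/-- `Σ^⋆_a`: members of `(Σ')^⋆_a` all of whose ideals satisfy (⋆-c.a.). -/
def SigmaCA (s : StarOperation A K) (a : A) : Set (Set (Ideal A)) :=
  {F | F ∈ SigmaP s a ∧ ∀ I ∈ F, StarCA s I}

/-- Let `A` be an integral domain, `⋆` a star operation on `A`, and `a` a nonzero
nonunit of `A`. If every proper ⋆-finite ⋆-ideal of `A` containing `a` is contained in
a proper ⋆-finite ⋆-ideal satisfying (⋆-c.a.), then `(Σ^⋆_a, ⊆)` has maximal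
elements. -/
theorem sigmaCA_has_maximal_elements
    (s : StarOperation A K) (a : A) (ha : a ≠ 0) (hau : ¬IsUnit a)
    (h : ∀ 𝔞 : Ideal A, a ∈ 𝔞 → 𝔞 ≠ ⊤ → IsStarIdeal s 𝔞 → IsStarFinite s 𝔞 →
      ∃ 𝔟 : Ideal A, 𝔞 ≤ 𝔟 ∧ 𝔟 ≠ ⊤ ∧ IsStarIdeal s 𝔟 ∧ IsStarFinite s 𝔟 ∧ StarCA s 𝔟) :
    ∃ F ∈ SigmaCA s a, ∀ G ∈ SigmaCA s a, F ⊆ G → G = F := by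
  have hempty : (∅ : Set (Ideal A)) ∈ SigmaCA s a := by
    refine ⟨⟨⟨fun I hI => absurd hI (Set.notMem_empty I),
      fun I hI => absurd hI (Set.notMem_empty I)⟩,
      fun I hI => absurd hI (Set.notMem_empty I)⟩,
      fun I hI => absurd hI (Set.notMem_empty I)⟩
  have hchain : ∀ c ⊆ SigmaCA s a, IsChain (· ⊆ ·) c →
      ∃ ub ∈ SigmaCA s a, ∀ t ∈ c, t ⊆ ub := by
    intro c hcS hc
    rcases c.eq_empty_or_nonempty with rfl | hne
    · exact ⟨∅, hempty, fun t ht => absurd ht (Set.notMem_empty t)⟩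
    · refine ⟨⋃₀ c, ?_, fun t ht => Set.subset_sUnion_of_mem ht⟩
      refine ⟨⟨⟨?_, ?_⟩, ?_⟩, ?_⟩
      · rintro I ⟨F, hF, hIF⟩
        exact (hcS hF).1.1.1 I hIF
      · rintro I ⟨F, hF, hIF⟩ J ⟨G, hG, hJG⟩ hIJ
        rcases hc.total hF hG with hFG | hGF
        · exact (hcS hG).1.1.2 I (hFG hIF) J hJG hIJ
        · exact (hcS hF).1.1.2 I hIF J (hGF hJG) hIJ
      · rintro I ⟨F, hF, hIF⟩
        exact (hcS hF).1.2 I hIF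
      · rintro I ⟨F, hF, hIF⟩
        exact (hcS hF).2 I hIF
  obtain ⟨m, hm⟩ := zorn_subset (SigmaCA s a) hchain
  exact ⟨m, hm.1, fun G hG hmG => (hm.eq_of_le hG hmG).symm⟩
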